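/- Let a, b ≥ 1 be integers with gcd(a,b) = 1, and let k ≥ 1. Then there exists a k-coloring of the interval [1, a^k − 1] with no monochromatic positive-integer solution (x,y,z) to the equation a(x − y) = bz. Consequently, the k-color Rado number R_k(a(x−y)=bz) is at least a^k. -/

import Mathlib

/-- For coprime `a, b ≥ 1`, there is a `k`-coloring of `[1, a^k - 1]` with no
monochromatic positive solution to `a(x - y) = bz`; consequently
`R_k(a(x-y)=bz) ≥ a^k`. -/
theorem stmt_1 (a b k : ℕ) (ha : 1 ≤ a) (hb : 1 ≤ b) (hk : 1 ≤ k)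
    (hgcd : Nat.gcd a b = 1) :
    (∃ χ : ℕ → Fin k, ∀ x y z : ℕ,
      1 ≤ x → x ≤ a ^ k - 1 → 1 ≤ y → y ≤ a ^ k - 1 → 1 ≤ z → z ≤ a ^ k - 1 →
      a * x = a * y + b * z → ¬ (χ x = χ y ∧ χ y = χ z)) ∧
    (∀ n : ℕ,
      (∀ χ : ℕ → Fin k, ∃ x y z : ℕ,
        1 ≤ x ∧ x ≤ n ∧ 1 ≤ y ∧ y ≤ n ∧ 1 ≤ z ∧ z ≤ n ∧
        a * x = a * y + b * z ∧ χ x = χ y ∧ χ y = χ z) →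
      a ^ k ≤ n) := by
  have hfirst : ∃ χ : ℕ → Fin k, ∀ x y z : ℕ,
      1 ≤ x → x ≤ a ^ k - 1 → 1 ≤ y → y ≤ a ^ k - 1 → 1 ≤ z → z ≤ a ^ k - 1 →
      a * x = a * y + b * z → ¬ (χ x = χ y ∧ χ y = χ z) := by
    by_cases ha2 : a = 1
    · refine ⟨fun _ => ⟨0, hk⟩, ?_⟩
      intro x y z hx hxu _ _ _ _ _ _
      subst ha2
      simp at hxu
      omega
    · have ha1 : 1 < a := by omega
      refine ⟨fun n => ⟨a.maxPowDiv n % k, Nat.mod_lt _ hk⟩, ?_⟩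
      intro x y z hx hxu hy hyu hz hzu heq hmono
      obtain ⟨hxy, hyz⟩ := hmono
      have key : ∀ m : ℕ, 1 ≤ m → m ≤ a ^ k - 1 → a.maxPowDiv m < k := by
        intro m hm hmu
        by_contra h
        push_neg at h
        have h1 : a ^ k ∣ m :=
          dvd_trans (pow_dvd_pow a h) (Nat.maxPowDiv.pow_dvd (p := a) (n := m))
        have h2 := Nat.le_of_dvd hm h1
        have h3 : 1 ≤ a ^ k := Nat.one_le_pow _ _ (by omega)
        omega
      have hvx := key x hx hxu
      have hvy := key y hy hyu
      have hvz := key z hz hzu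
      have exy : a.maxPowDiv x = a.maxPowDiv y := by
        have := Fin.mk.injEq (a.maxPowDiv x % k) _ (a.maxPowDiv y % k) _ ▸ hxy
        have h' : a.maxPowDiv x % k = a.maxPowDiv y % k := Fin.mk.inj_iff.mp hxy
        rwa [Nat.mod_eq_of_lt hvx, Nat.mod_eq_of_lt hvy] at h'
      have eyz : a.maxPowDiv y = a.maxPowDiv z := by
        have h' : a.maxPowDiv y % k = a.maxPowDiv z % k := Fin.mk.inj_iff.mp hyz
        rwa [Nat.mod_eq_of_lt hvy, Nat.mod_eq_of_lt hvz] at h'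
      have hxd : a ^ a.maxPowDiv x ∣ x := Nat.maxPowDiv.pow_dvd (p := a) (n := x)
      rw [exy, eyz] at hxd
      obtain ⟨x', hx'⟩ := hxd
      have hyd : a ^ a.maxPowDiv y ∣ y := Nat.maxPowDiv.pow_dvd (p := a) (n := y)
      rw [eyz] at hyd
      obtain ⟨y', hy'⟩ := hyd
      have hzd : a ^ a.maxPowDiv z ∣ z := Nat.maxPowDiv.pow_dvd (p := a) (n := z)
      obtain ⟨z', hz'⟩ := hzd
      have hpow : 0 < a ^ a.maxPowDiv z := Nat.pow_pos (by omega)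
      have heq' : a * x' = a * y' + b * z' := by
        apply Nat.eq_of_mul_eq_mul_left hpow
        have h0 : a * (a ^ a.maxPowDiv z * x')
            = a * (a ^ a.maxPowDiv z * y') + b * (a ^ a.maxPowDiv z * z') := by
          rw [← hx', ← hy', ← hz']; exact heq
        ring_nf
        ring_nf at h0
        linarith [h0]
      have hdvd : a ∣ b * z' := by
        have h1 : a ∣ a * x' := Dvd.intro x' rfl
        have h2 : a ∣ a * y' := Dvd.intro y' rfl
        have := Nat.dvd_sub h1 h2
        have hsub : a * x' - a * y' = b * z' := by omega
        rwa [hsub] at this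
      have hdz : a ∣ z' := (Nat.coprime_iff_gcd_eq_one.mpr hgcd).dvd_of_dvd_mul_left hdvd
      have hdvd2 : a ^ (a.maxPowDiv z + 1) ∣ z := by
        obtain ⟨c, hc⟩ := hdz
        refine ⟨c, ?_⟩
        calc z = a ^ a.maxPowDiv z * z' := hz'
          _ = a ^ a.maxPowDiv z * (a * c) := by rw [hc]
          _ = a ^ (a.maxPowDiv z + 1) * c := by ring
      have : a.maxPowDiv z + 1 ≤ a.maxPowDiv z :=
        (Nat.pow_dvd_iff_le_padicValNat (n := z) ha1.ne' (by omega)).mp hdvd2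
      omega
  refine ⟨hfirst, ?_⟩
  intro n hn
  by_contra hlt
  push_neg at hlt
  obtain ⟨χ, hχ⟩ := hfirst
  obtain ⟨x, y, z, hx, hxn, hy, hyn, hz, hzn, heq, hxy, hyz⟩ := hn χ
  have h3 : 1 ≤ a ^ k := Nat.one_le_pow _ _ (by omega)
  exact hχ x y z hx (by omega) hy (by omega) hz (by omega) heq ⟨hxy, hyz⟩
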